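/- If a radial density ρ supported in an annulus satisfies the integral equation U⋆ρ = D + (α/β)(ln|x| - φ(|x|)) on supp ρ for some constant D, then the pair (ρ, u) with u(x) = √(α/β)x^⊥/|x| is a stationary solution of the hydrodynamic system ∇·(ρu) = 0, (u·∇)u = -∇(U⋆ρ) - (|u|²I - u⊗u)∇φ on supp ρ. -/

import Mathlib

open MeasureTheory

/-- The perpendicular vector `x^⊥ = (-x₂, x₁)` in ℝ². -/
noncomputable def perp (x : EuclideanSpace ℝ (Fin 2)) : EuclideanSpace ℝ (Fin 2) :=
  WithLp.toLp 2 (fun i : Fin 2 => if i = 0 then -x 1 else x 0)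

local notation "E2" => EuclideanSpace ℝ (Fin 2)

lemma perp_apply_zero (x : E2) : perp x 0 = -x 1 := by simp [perp]
lemma perp_apply_one (x : E2) : perp x 1 = x 0 := by simp [perp]

lemma inner_self_perp (x : E2) : (inner ℝ x (perp x) : ℝ) = 0 := by
  simp [PiLp.inner_apply, Fin.sum_univ_two, perp, RCLike.inner_apply]
  ring

lemma norm_perp (x : E2) : ‖perp x‖ = ‖x‖ := by
  rw [EuclideanSpace.norm_eq, EuclideanSpace.norm_eq]
  simp [Fin.sum_univ_two, perp, Real.norm_eq_abs, sq_abs, add_comm]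

lemma decomp_two (v : E2) :
    v 0 • EuclideanSpace.single 0 (1:ℝ) + v 1 • EuclideanSpace.single 1 (1:ℝ) = v := by
  ext i
  fin_cases i <;> simp [EuclideanSpace.single_apply]

lemma radial_fderiv_perp {f : E2 → ℝ} {ft : ℝ → ℝ} (hrad : ∀ y, f y = ft ‖y‖)
    {x : E2} (hf : DifferentiableAt ℝ f x) : fderiv ℝ f x (perp x) = 0 := by
  set γ : ℝ → E2 := fun t => Real.cos t • x + Real.sin t • perp x with hγ
  have hγ0 : γ 0 = x := by simp [hγ]
  have hnorm : ∀ t, ‖γ t‖ = ‖x‖ := by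
    intro t
    have h1 : ‖γ t‖ ^ 2 = ‖x‖ ^ 2 := by
      have hns := norm_add_sq_real (Real.cos t • x) (Real.sin t • perp x)
      rw [real_inner_smul_left, real_inner_smul_right, inner_self_perp] at hns
      have hsc : Real.sin t ^ 2 + Real.cos t ^ 2 = 1 := Real.sin_sq_add_cos_sq t
      rw [hγ]
      simp only [hns, norm_smul, Real.norm_eq_abs, mul_pow, sq_abs, norm_perp]
      nlinarith [hsc]
    calc ‖γ t‖ = Real.sqrt (‖γ t‖ ^ 2) := (Real.sqrt_sq (norm_nonneg _)).symm
      _ = Real.sqrt (‖x‖ ^ 2) := by rw [h1]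
      _ = ‖x‖ := Real.sqrt_sq (norm_nonneg _)
  have hγd : HasDerivAt γ (perp x) 0 := by
    have h1 : HasDerivAt (fun t => Real.cos t • x) ((-Real.sin 0) • x) 0 :=
      (Real.hasDerivAt_cos 0).smul_const x
    have h2 : HasDerivAt (fun t => Real.sin t • perp x) (Real.cos 0 • perp x) 0 :=
      (Real.hasDerivAt_sin 0).smul_const (perp x)
    have h := h1.add h2
    rw [show -Real.sin 0 • x + Real.cos 0 • perp x = perp x by simp] at h
    exact h
  have hfd : HasFDerivAt f (fderiv ℝ f x) (γ 0) := hγ0 ▸ hf.hasFDerivAt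
  have hcomp : HasDerivAt (f ∘ γ) (fderiv ℝ f x (perp x)) 0 :=
    hfd.comp_hasDerivAt 0 hγd
  have hconst : (f ∘ γ) = fun _ => ft ‖x‖ := by
    funext t; simp [Function.comp, hrad, hnorm]
  have hzero : HasDerivAt (f ∘ γ) 0 0 := by rw [hconst]; exact hasDerivAt_const _ _
  exact hcomp.unique hzero

/-- If a radial density `ρ` supported in an annulus (not containing the origin) satisfies
`U⋆ρ = D + (α/β)(ln|x| - φ(|x|))` on `supp ρ`, then `(ρ, u)` with `u = √(α/β) x^⊥/|x|`
is a stationary solution of the hydrodynamic system: `∇·(ρu) = 0` and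
`(u·∇)u = -∇(U⋆ρ) - (|u|²I - u⊗u)∇φ` on `supp ρ`. -/
theorem stmt7 (α β : ℝ) (hα : 0 < α) (hβ : 0 < β)
    (U : EuclideanSpace ℝ (Fin 2) → ℝ) (hU : ContDiff ℝ 2 U)
    (Ut : ℝ → ℝ) (hUrad : ∀ x, U x = Ut ‖x‖)
    (φ : EuclideanSpace ℝ (Fin 2) → ℝ) (hφ : ContDiff ℝ 1 φ)
    (φt : ℝ → ℝ) (hφrad : ∀ x, φ x = φt ‖x‖)
    (ρ : EuclideanSpace ℝ (Fin 2) → ℝ) (hρ : ContDiff ℝ 1 ρ) (hρpos : ∀ x, 0 ≤ ρ x)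
    (ρt : ℝ → ℝ) (hρrad : ∀ x, ρ x = ρt ‖x‖)
    (r₁ r₂ : ℝ) (hr₁ : 0 < r₁) (hr₁₂ : r₁ < r₂)
    (hsupp : ∀ x ∈ Function.support ρ, r₁ ≤ ‖x‖ ∧ ‖x‖ ≤ r₂)
    (D : ℝ)
    (hint : ∀ x ∈ Function.support ρ,
      (∫ y, U (x - y) * ρ y) = D + (α / β) * (Real.log ‖x‖ - φt ‖x‖))
    (u : EuclideanSpace ℝ (Fin 2) → EuclideanSpace ℝ (Fin 2))
    (hu : ∀ x, x ≠ 0 → u x = (Real.sqrt (α / β) / ‖x‖) • perp x) :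
    ∀ x ∈ Function.support ρ,
      ((∑ i, fderiv ℝ (fun y => ρ y * u y i) x (EuclideanSpace.single i 1)) = 0) ∧
      ((WithLp.toLp 2 (fun i => fderiv ℝ (fun y => u y i) x (u x)) : EuclideanSpace ℝ (Fin 2)) =
        -gradient (fun z => ∫ y, U (z - y) * ρ y) x -
          (‖u x‖ ^ 2 • gradient φ x - (inner ℝ (u x) (gradient φ x) : ℝ) • u x)) := by
  intro x hx
  have hx1 : r₁ ≤ ‖x‖ := (hsupp x hx).1
  have hxpos : 0 < ‖x‖ := lt_of_lt_of_le hr₁ hx1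
  have hx0 : x ≠ (0 : E2) := by
    intro h; rw [h, norm_zero] at hxpos; exact lt_irrefl 0 hxpos
  have hxn : ‖x‖ ≠ 0 := ne_of_gt hxpos
  set c := Real.sqrt (α / β) with hc
  have hcnn : 0 ≤ c := Real.sqrt_nonneg _
  have hcsq : c ^ 2 = α / β := Real.sq_sqrt (by positivity)
  have hnormdiff : DifferentiableAt ℝ (fun y : E2 => ‖y‖) x :=
    DifferentiableAt.norm (𝕜 := ℝ) differentiableAt_id hx0
  have hinvdiff : DifferentiableAt ℝ (fun y : E2 => c / ‖y‖) x := by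
    simp only [div_eq_mul_inv]
    exact (hnormdiff.inv hxn).const_mul c
  have hρdiff : DifferentiableAt ℝ ρ x := (hρ.differentiable one_ne_zero) x
  have hne : ∀ᶠ y in nhds x, y ≠ (0 : E2) := eventually_ne_nhds hx0
  -- derivative facts for the perp coordinates
  have h0 : HasFDerivAt (fun y : E2 => perp y 0) (-(EuclideanSpace.proj 1 : E2 →L[ℝ] ℝ)) x := by
    have he : (fun y : E2 => perp y 0) = fun y => -(y 1) := by
      funext y; simp [perp]
    rw [he]; exact (EuclideanSpace.proj (1 : Fin 2) : E2 →L[ℝ] ℝ).hasFDerivAt.neg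
  have h1 : HasFDerivAt (fun y : E2 => perp y 1) (EuclideanSpace.proj 0 : E2 →L[ℝ] ℝ) x := by
    have he : (fun y : E2 => perp y 1) = fun y => y 0 := by
      funext y; simp [perp]
    rw [he]; exact (EuclideanSpace.proj (0 : Fin 2) : E2 →L[ℝ] ℝ).hasFDerivAt
  have hux : u x = (c / ‖x‖) • perp x := hu x hx0
  constructor
  · -- divergence part
    set H : E2 → ℝ := fun y => c / ‖y‖ * ρ y with hH
    have hHrad : ∀ y, H y = (fun r => c / r * ρt r) ‖y‖ := by
      intro y; simp only [hH]; rw [hρrad y]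
    have hHdiff : DifferentiableAt ℝ H x :=
      hinvdiff.mul hρdiff
    have hev : ∀ i : Fin 2, fderiv ℝ (fun y => ρ y * u y i) x
        = fderiv ℝ (fun y => H y * perp y i) x := by
      intro i
      apply Filter.EventuallyEq.fderiv_eq
      filter_upwards [hne] with y hy
      rw [hu y hy]
      simp only [hH, PiLp.smul_apply, smul_eq_mul]
      ring
    rw [Fin.sum_univ_two, hev 0, hev 1,
      fderiv_fun_mul hHdiff h0.differentiableAt, fderiv_fun_mul hHdiff h1.differentiableAt,
      h0.fderiv, h1.fderiv]
    have key : fderiv ℝ H x (perp x) = 0 := radial_fderiv_perp (ft := fun r => c / r * ρt r) hHrad hHdiff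
    rw [← decomp_two (perp x), map_add, (fderiv ℝ H x).map_smul, (fderiv ℝ H x).map_smul] at key
    simp only [ContinuousLinearMap.add_apply, ContinuousLinearMap.smul_apply,
      ContinuousLinearMap.neg_apply, PiLp.proj_apply, smul_eq_mul,
      EuclideanSpace.single_apply] at key ⊢
    norm_num
    linarith [key]
  · -- momentum equation
    set h₂ : E2 → ℝ := fun y => c / ‖y‖ with hh₂
    have hh₂rad : ∀ y, h₂ y = (fun r => c / r) ‖y‖ := fun y => rfl
    have hh₂diff : DifferentiableAt ℝ h₂ x := hinvdiff
    have hh₂perp : fderiv ℝ h₂ x (perp x) = 0 := radial_fderiv_perp hh₂rad hh₂diff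
    have hφdiff : DifferentiableAt ℝ φ x := (hφ.differentiable one_ne_zero) x
    have hφperp : fderiv ℝ φ x (perp x) = 0 :=
      radial_fderiv_perp (fun y => hφrad y) hφdiff
    -- toDual of gradient
    have toDual_grad : ∀ f : E2 → ℝ, ∀ z : E2,
        (InnerProductSpace.toDual ℝ E2) (gradient f z) = fderiv ℝ f z := by
      intro f z
      unfold gradient
      exact (InnerProductSpace.toDual ℝ E2).apply_symm_apply _
    -- inner (u x) (gradient φ x) = 0
    have hinner : (inner ℝ (u x) (gradient φ x) : ℝ) = 0 := by
      rw [real_inner_comm]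
      have : (inner ℝ (gradient φ x) (u x) : ℝ) = fderiv ℝ φ x (u x) := by
        rw [← toDual_grad φ x]; rfl
      rw [this, hux, (fderiv ℝ φ x).map_smul, hφperp, smul_zero]
    -- ‖u x‖ ^ 2 = α / β
    have hnux : ‖u x‖ ^ 2 = α / β := by
      rw [hux, norm_smul, Real.norm_eq_abs, abs_of_nonneg (by positivity : (0:ℝ) ≤ c / ‖x‖),
        norm_perp, div_mul_cancel₀ _ hxn]
      exact hcsq
    -- gradient of the convolution
    have hsopen : IsOpen (Function.support ρ) := by
      rw [Function.support_eq_preimage]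
      exact (isOpen_compl_singleton).preimage (hρ.continuous)
    have hFG : (fun z => ∫ y, U (z - y) * ρ y)
        =ᶠ[nhds x] (fun z => D + (α / β) * (Real.log ‖z‖ - φ z)) := by
      filter_upwards [hsopen.mem_nhds hx] with z hz
      rw [hint z hz, hφrad z]
    have hlog : HasFDerivAt (fun z : E2 => Real.log ‖z‖)
        ((‖x‖ ^ 2)⁻¹ • innerSL ℝ x) x := by
      have hsq : HasFDerivAt (fun z : E2 => ‖z‖ ^ 2) (2 • innerSL ℝ x) x := by
        simpa using (hasFDerivAt_id x).norm_sq
      have hl : HasDerivAt Real.log (‖x‖ ^ 2)⁻¹ (‖x‖ ^ 2) :=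
        Real.hasDerivAt_log (by positivity)
      have h3 := hl.comp_hasFDerivAt x hsq
      have h4 : (fun z : E2 => Real.log ‖z‖)
          = fun z : E2 => (1 / 2 : ℝ) * Real.log (‖z‖ ^ 2) := by
        funext z; rw [Real.log_pow]; push_cast; ring
      rw [h4]
      have h5 := h3.const_mul (1 / 2 : ℝ)
      refine h5.congr_fderiv ?_
      ext v
      simp only [ContinuousLinearMap.smul_apply, smul_eq_mul]
      ring
    have hG : HasFDerivAt (fun z : E2 => D + (α / β) * (Real.log ‖z‖ - φ z))
        ((α / β) • ((‖x‖ ^ 2)⁻¹ • innerSL ℝ x - fderiv ℝ φ x)) x :=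
      (((hlog.sub hφdiff.hasFDerivAt).const_mul (α / β)).const_add D)
    have hgrad : gradient (fun z => ∫ y, U (z - y) * ρ y) x
        = (α / β) • ((‖x‖ ^ 2)⁻¹ • x - gradient φ x) := by
      unfold gradient
      rw [hFG.fderiv_eq, hG.fderiv]
      apply (InnerProductSpace.toDual ℝ E2).injective
      rw [(InnerProductSpace.toDual ℝ E2).apply_symm_apply, _root_.map_smul, map_sub,
        _root_.map_smul, (InnerProductSpace.toDual ℝ E2).apply_symm_apply]
      ext v
      simp [InnerProductSpace.toDual_apply_apply]
    -- now compute LHS componentwise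
    have hev2 : ∀ i : Fin 2, fderiv ℝ (fun y => u y i) x
        = fderiv ℝ (fun y => h₂ y * perp y i) x := by
      intro i
      apply Filter.EventuallyEq.fderiv_eq
      filter_upwards [hne] with y hy
      rw [hu y hy]
      simp only [hh₂, PiLp.smul_apply, smul_eq_mul]
    have hfd2 : ∀ i : Fin 2, fderiv ℝ (fun y => h₂ y * perp y i) x (u x)
        = h₂ x * (fderiv ℝ (fun y => perp y i) x (u x)) := by
      intro i
      have hpd : DifferentiableAt ℝ (fun y => perp y i) x := by
        fin_cases i
        · exact h0.differentiableAt
        · exact h1.differentiableAt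
      rw [fderiv_fun_mul hh₂diff hpd]
      have : fderiv ℝ h₂ x (u x) = 0 := by
        rw [hux, (fderiv ℝ h₂ x).map_smul, hh₂perp, smul_zero]
      simp [this]
    have hLHS : ∀ i : Fin 2, fderiv ℝ (fun y => u y i) x (u x)
        = -(c / ‖x‖ * (c / ‖x‖)) * x i := by
      intro i
      rw [hev2 i, hfd2 i]
      fin_cases i
      · show h₂ x * (fderiv ℝ (fun y => perp y 0) x) (u x) = -(c / ‖x‖ * (c / ‖x‖)) * x 0
        rw [h0.fderiv]
        simp only [ContinuousLinearMap.neg_apply, PiLp.proj_apply, hux,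
          PiLp.smul_apply, smul_eq_mul, perp_apply_one, hh₂]
        ring
      · show h₂ x * (fderiv ℝ (fun y => perp y 1) x) (u x) = -(c / ‖x‖ * (c / ‖x‖)) * x 1
        rw [h1.fderiv]
        simp only [PiLp.proj_apply, hux, PiLp.smul_apply, smul_eq_mul,
          perp_apply_zero, hh₂]
        ring
    ext i
    show fderiv ℝ (fun y => u y i) x (u x) = _
    rw [hLHS i, hgrad, hinner, hnux]
    simp only [zero_smul, sub_zero, PiLp.sub_apply, PiLp.neg_apply, PiLp.smul_apply,
      smul_eq_mul]
    have hcc : c / ‖x‖ * (c / ‖x‖) = (α / β) * (‖x‖ ^ 2)⁻¹ := by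
      rw [div_mul_div_comm, ← sq, ← sq, hcsq]
      ring
    rw [hcc]
    ring
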